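/- Let R and S be nonnegative integer vectors in ℤ^n with equal component sums and each component at most n. There exists a symmetric n×n (0,1)-matrix with row sum vector R and column sum vector S if and only if R = S and R ⪯ R*. -/

import Mathlib

/-- The multiset of components of a vector. -/
def vecMS {n : ℕ} (v : Fin n → ℕ) : Multiset ℕ := Multiset.map v Finset.univ.val

/-- The sum of the `k` largest elements of a multiset of natural numbers. -/
def topSum (M : Multiset ℕ) (k : ℕ) : ℕ := ((M.sort (· ≤ ·)).reverse.take k).sum

/-- `MajorizedBy S R` means `S ⪯ R`: the component sums agree and every
partial sum of the weakly decreasing rearrangement of `R` dominates the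
corresponding partial sum for `S`. -/
def MajorizedBy (S R : Multiset ℕ) : Prop := S.sum = R.sum ∧ ∀ k, topSum S k ≤ topSum R k

/-- The conjugate `R*` of (the weakly decreasing rearrangement of) `R`,
viewed as an integer partition. -/
def conjMS (M : Multiset ℕ) : Multiset ℕ :=
  (Multiset.range M.sum).map fun j => (M.filter (fun x => j + 1 ≤ x)).card

section PartA
open Finset List


lemma take_sum_mono (l : List ℕ) {k k' : ℕ} (h : k ≤ k') : (l.take k).sum ≤ (l.take k').sum :=
  (List.take_sublist_take_left (l := l) h).sum_le_sum (fun _ _ => Nat.zero_le _)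

lemma take_succ_sum_le (l : List ℕ) (a n : ℕ) (h : ∀ x ∈ l, x ≤ a) :
    (l.take (n+1)).sum ≤ (l.take n).sum + a := by
  rw [List.take_succ, List.sum_append]
  gcongr
  cases h' : l[n]? with
  | none => simp
  | some x => simpa using h x (List.mem_of_getElem? h')

lemma sublist_sum_le_take : ∀ {l l' : List ℕ}, l' <+ l → l.Pairwise (· ≥ ·) →
    l'.sum ≤ (l.take l'.length).sum := by
  intro l l' h
  induction h with
  | slnil => simp
  | @cons l₁ l₂ a h ih =>
    intro hs
    rw [List.pairwise_cons] at hs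
    refine le_trans (ih hs.2) ?_
    cases hn : l₁.length with
    | zero => simp
    | succ n =>
      calc (l₂.take (n+1)).sum ≤ (l₂.take n).sum + a :=
            take_succ_sum_le _ _ _ (fun x hx => hs.1 x hx)
        _ ≤ ((a :: l₂).take (n+1)).sum := by simp [Nat.add_comm]
  | @cons_cons l₁ l₂ a h ih =>
    intro hs
    rw [List.pairwise_cons] at hs
    simpa [Nat.add_comm] using Nat.add_le_add_left (ih hs.2) a

/-- the weakly decreasing list underlying `topSum` -/
def descList (M : Multiset ℕ) : List ℕ := (M.sort (· ≤ ·)).reverse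

lemma descList_coe (M : Multiset ℕ) : (descList M : Multiset ℕ) = M := by
  rw [descList, Multiset.coe_reverse]
  exact Multiset.sort_eq (s := M) (r := _)

lemma descList_sorted (M : Multiset ℕ) : (descList M).Pairwise (· ≥ ·) := by
  have := Multiset.pairwise_sort (α := ℕ) (r := (· ≤ ·)) (s := M)
  rw [descList]
  exact List.pairwise_reverse.2 this

lemma topSum_eq_take (M : Multiset ℕ) (k : ℕ) : topSum M k = ((descList M).take k).sum := rfl

lemma sum_le_topSum {M N : Multiset ℕ} {k : ℕ} (hNM : N ≤ M) (hcard : Multiset.card N ≤ k) :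
    N.sum ≤ topSum M k := by
  have hM : N ≤ ((descList M : Multiset ℕ)) := by rw [descList_coe]; exact hNM
  obtain ⟨l', rfl⟩ := Quotient.exists_rep N
  rw [show ((⟦l'⟧ : Multiset ℕ) = (l' : Multiset ℕ)) from rfl, Multiset.coe_le] at hM
  obtain ⟨l'', hperm, hsub⟩ := hM
  have h1 : Multiset.sum (⟦l'⟧ : Multiset ℕ) = l''.sum := hperm.sum_eq.symm
  have h2 : Multiset.card (⟦l'⟧ : Multiset ℕ) = l''.length := by
    simpa using hperm.length_eq.symm
  rw [h1, topSum_eq_take]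
  calc l''.sum ≤ ((descList M).take l''.length).sum :=
        sublist_sum_le_take hsub (descList_sorted M)
    _ ≤ ((descList M).take k).sum := take_sum_mono _ (by omega)

lemma topSum_exists (M : Multiset ℕ) (k : ℕ) :
    ∃ N ≤ M, Multiset.card N ≤ k ∧ N.sum = topSum M k := by
  refine ⟨((descList M).take k : List ℕ), ?_, ?_, rfl⟩
  · conv_rhs => rw [← descList_coe M]
    exact Multiset.coe_le.2 (List.take_sublist _ _).subperm
  · simpa using Nat.min_le_left _ _

lemma topSum_coe_of_sorted (l : List ℕ) (h : l.Pairwise (· ≥ ·)) (k : ℕ) :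
    topSum (↑l) k = (l.take k).sum := by
  have hd : descList (↑l) = l := by
    refine List.Perm.eq_of_pairwise (fun a b _ _ h1 h2 => le_antisymm h2 h1) (descList_sorted _) h (Multiset.coe_eq_coe.1 (descList_coe _))
  rw [topSum_eq_take, hd]

lemma sum_ite_lt (K a : ℕ) : (∑ j ∈ range K, if j + 1 ≤ a then 1 else 0) = min a K := by
  induction K with
  | zero => simp
  | succ n ih => rw [Finset.sum_range_succ, ih]; split <;> omega

lemma sum_min_count (M : Multiset ℕ) (K : ℕ) :
    (∑ j ∈ range K, (Multiset.card (M.filter (fun x => j + 1 ≤ x)))) =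
      (M.map (fun x => min x K)).sum := by
  induction M using Multiset.induction_on with
  | empty => simp
  | cons a M ih =>
    simp only [Multiset.filter_cons, Multiset.card_add, Multiset.map_cons, Multiset.sum_cons,
      Finset.sum_add_distrib, ih]
    congr 1
    have : ∀ j, Multiset.card (if j + 1 ≤ a then ({a} : Multiset ℕ) else 0) =
        if j + 1 ≤ a then 1 else 0 := by intro j; split <;> simp
    rw [Finset.sum_congr rfl (fun j _ => this j), sum_ite_lt]

lemma conjMS_coe (M : Multiset ℕ) :
    conjMS M = ((List.range M.sum).map fun j => Multiset.card (M.filter (fun x => j + 1 ≤ x)) : List ℕ) := by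
  rfl

lemma conjMS_sorted (M : Multiset ℕ) :
    ((List.range M.sum).map fun j => Multiset.card (M.filter (fun x => j + 1 ≤ x))).Pairwise (· ≥ ·) := by
  refine List.Pairwise.map _ ?_ (List.pairwise_lt_range (n := M.sum))
  intro a b hab
  exact Multiset.card_le_card (Multiset.monotone_filter_right _ (fun x hx => by omega))

lemma list_range_map_sum (n : ℕ) (f : ℕ → ℕ) :
    ((List.range n).map f).sum = ∑ j ∈ range n, f j := by
  induction n with
  | zero => simp
  | succ m ih =>
    rw [List.range_succ, Finset.sum_range_succ, List.map_append, List.sum_append, ih]; simp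

lemma topSum_conjMS (M : Multiset ℕ) (k : ℕ) :
    topSum (conjMS M) k = (M.map (fun x => min x k)).sum := by
  rw [conjMS_coe, topSum_coe_of_sorted _ (conjMS_sorted M)]
  rw [← List.map_take, List.take_range, list_range_map_sum, sum_min_count]
  refine congrArg _ (Multiset.map_congr rfl ?_)
  intro x hx
  have : x ≤ M.sum := Multiset.single_le_sum (fun _ _ => Nat.zero_le _) x hx
  omega

lemma conjMS_sum (M : Multiset ℕ) : (conjMS M).sum = M.sum := by
  rw [conjMS_coe, Multiset.sum_coe, list_range_map_sum, sum_min_count]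
  have : M.map (fun x => min x M.sum) = M.map id := by
    refine Multiset.map_congr rfl ?_
    intro x hx
    have : x ≤ M.sum := Multiset.single_le_sum (fun _ _ => Nat.zero_le _) x hx
    simp; omega
  rw [this, Multiset.map_id]

end PartA

section PartB
open Finset


lemma sum_range_split (F : ℕ → ℕ) {a b : ℕ} (h : a ≤ b) :
    ∑ i ∈ range b, F i = (∑ i ∈ range a, F i) + ∑ i ∈ Ico a b, F i := by
  simp only [range_eq_Ico]
  exact (Finset.sum_Ico_consecutive F (Nat.zero_le a) h).symm

lemma sum_sub_one {t : ℕ → ℕ} {j : ℕ} (h : ∀ i, i < j → 1 ≤ t i) :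
    (∑ i ∈ range j, (t i - 1)) + j = ∑ i ∈ range j, t i := by
  induction j with
  | zero => simp
  | succ n ih =>
    rw [Finset.sum_range_succ, Finset.sum_range_succ]
    have h1 := h n (by omega)
    have h2 := ih (fun i hi => h i (by omega))
    omega

lemma sum_Ico_const_of_eq {t : ℕ → ℕ} {a b v : ℕ} (h : ∀ i, a ≤ i → i < b → t i = v) :
    ∑ i ∈ Ico a b, t i = (b - a) * v := by
  rw [Finset.sum_congr rfl (fun i hi => h i (mem_Ico.1 hi).1 (mem_Ico.1 hi).2),
    Finset.sum_const, Nat.card_Ico, smul_eq_mul]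

/-- The central combinatorial inequality for the laying-off induction. -/
lemma star_main (m d : ℕ) (t : ℕ → ℕ) (hdm : d ≤ m)
    (hmono : ∀ ⦃i j : ℕ⦄, i ≤ j → t j ≤ t i)
    (hF1 : ∀ i, t i ≤ d + 1)
    (hF2 : ∀ i, i < d → 1 ≤ t i)
    (hz : ∀ i, m ≤ i → t i = 0)
    (hH : ∀ c : ℕ, (d + 1) + (∑ i ∈ range c, t i) ≤ min (d+1) (c+1) + ∑ i ∈ range m, min (t i) (c+1)) :
    ∀ k j g, j + g ≤ k → j ≤ d → d + g ≤ m →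
      ((∑ i ∈ range j, (t i - 1)) + ∑ i ∈ range g, t (d + i)) ≤
        ∑ i ∈ range m, min (t i - (if i < d then 1 else 0)) k := by
  intro k
  set t' : ℕ → ℕ := fun i => t i - (if i < d then 1 else 0) with ht'
  have ht'lt : ∀ i, i < d → t' i = t i - 1 := by intro i hi; simp [ht', hi]
  have ht'ge : ∀ i, d ≤ i → t' i = t i := by
    intro i hi; simp only [ht']; rw [if_neg (by omega)]; omega
  set B : ℕ := ∑ i ∈ range m, min (t' i) k with hB
  show ∀ j g, j + g ≤ k → j ≤ d → d + g ≤ m →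
      ((∑ i ∈ range j, (t i - 1)) + ∑ i ∈ range g, t (d + i)) ≤ B
  by_cases hkd : d + 1 ≤ k
  · -- easy case : k ≥ d+1
    intro j g hjg hjd hdg
    have hBeq : B = (∑ i ∈ range d, (t i - 1)) + ∑ i ∈ Ico d m, t i := by
      rw [hB]
      have hpt : ∀ i, min (t' i) k = t' i := by
        intro i; have h1 := hF1 i
        have : t' i ≤ d + 1 := by simp only [ht']; omega
        omega
      rw [Finset.sum_congr rfl (fun i _ => hpt i), sum_range_split t' hdm]
      congr 1
      · exact Finset.sum_congr rfl (fun i hi => ht'lt i (mem_range.1 hi))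
      · exact Finset.sum_congr rfl (fun i hi => ht'ge i (mem_Ico.1 hi).1)
    have h1 : (∑ i ∈ range j, (t i - 1)) ≤ ∑ i ∈ range d, (t i - 1) := by
      rw [sum_range_split (fun i => t i - 1) hjd]; omega
    have h2 : (∑ i ∈ range g, t (d + i)) ≤ ∑ i ∈ Ico d m, t i := by
      have e : ∑ i ∈ Ico d (d+g), t i = ∑ i ∈ range g, t (d + i) := by
        have hg' : d + g - d = g := by omega
        rw [Finset.sum_Ico_eq_sum_range, hg']
      rw [← e]
      exact Finset.sum_le_sum_of_subset (Finset.Ico_subset_Ico_right (by omega))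
    rw [hBeq]; omega
  · push_neg at hkd
    have hkdle : k ≤ d := by omega
    -- the count q of entries ≥ k+1
    obtain ⟨q, hqm, hq1, hq2⟩ :
        ∃ q, q ≤ m ∧ (∀ i, i < q → k + 1 ≤ t i) ∧ (∀ i, q ≤ i → t i ≤ k) := by
      refine ⟨((range m).filter (fun i => k+1 ≤ t i)).card,
        (card_filter_le _ _).trans (by simp), ?_, ?_⟩
      · intro i hi
        by_contra hcon; push_neg at hcon
        have hsub : ((range m).filter (fun i => k+1 ≤ t i)) ⊆ range i := by
          intro x hxQ
          rw [mem_filter] at hxQ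
          rw [mem_range]
          by_contra h'; push_neg at h'
          have : t x ≤ t i := hmono h'
          omega
        have := card_le_card hsub
        rw [card_range] at this; omega
      · intro i hi
        by_contra hcon; push_neg at hcon
        have him : i < m := by
          by_contra h'; push_neg at h'
          have := hz i h'; omega
        have hsub : range (i+1) ⊆ ((range m).filter (fun i => k+1 ≤ t i)) := by
          intro x hx
          rw [mem_filter, mem_range]
          have hx' := mem_range.1 hx
          have : t i ≤ t x := hmono (by omega)
          exact ⟨by omega, by omega⟩
        have := card_le_card hsub
        rw [card_range] at this; omega
    -- main claim at j = k - g, by induction on g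
    have main : ∀ g, g ≤ k → d + g ≤ m →
        ((∑ i ∈ range (k-g), (t i - 1)) + ∑ i ∈ range g, t (d + i)) ≤ B := by
      intro g
      induction g with
      | zero =>
        intro _ hdg
        simp only [Nat.sub_zero, Finset.range_zero, Finset.sum_empty, Nat.add_zero]
        by_cases hqd : q ≤ d
        · -- H(k+1) chain
          have h0 := hH k
          have hmin : min (d+1) (k+1) = k+1 := by omega
          rw [hmin] at h0
          have hMle : (∑ i ∈ range m, min (t i) (k+1)) ≤ B + d := by
            rw [hB, sum_range_split (fun i => min (t i) (k+1)) hdm,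
              sum_range_split (fun i => min (t' i) k) hdm]
            have e1 : ∑ i ∈ range d, min (t i) (k+1) = (∑ i ∈ range d, min (t' i) k) + d := by
              have hd : (d:ℕ) = ∑ _i ∈ range d, 1 := by simp
              conv_lhs => rw [show (∑ i ∈ range d, min (t i) (k+1)) =
                ∑ i ∈ range d, (min (t' i) k + 1) from Finset.sum_congr rfl (fun i hi => by
                  have h1 := ht'lt i (mem_range.1 hi)
                  have h2 := hF2 i (mem_range.1 hi)
                  omega)]
              rw [Finset.sum_add_distrib]
              simp
            have e2 : ∑ i ∈ Ico d m, min (t i) (k+1) = ∑ i ∈ Ico d m, min (t' i) k := by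
              refine Finset.sum_congr rfl ?_
              intro i hi
              have h1 := (mem_Ico.1 hi).1
              have h2 := hq2 i (by omega)
              have h3 := ht'ge i h1
              omega
            omega
          have hTk : (∑ i ∈ range k, (t i - 1)) + k = ∑ i ∈ range k, t i :=
            sum_sub_one (fun i hi => hF2 i (by omega))
          omega
        · push_neg at hqd
          have hBge : d * k ≤ B := by
            rw [hB, sum_range_split (fun i => min (t' i) k) hdm]
            have e : ∑ i ∈ range d, min (t' i) k = d * k := by
              have hpt : ∀ i ∈ range d, min (t' i) k = k := by
                intro i hi
                have h1 := hq1 i (by have := mem_range.1 hi; omega)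
                have h2 := ht'lt i (mem_range.1 hi)
                omega
              rw [Finset.sum_congr rfl hpt, Finset.sum_const, card_range, smul_eq_mul]
            omega
          have hLle : (∑ i ∈ range k, (t i - 1)) ≤ k * d := by
            calc (∑ i ∈ range k, (t i - 1)) ≤ ∑ _i ∈ range k, d :=
                  Finset.sum_le_sum (fun i _ => by have := hF1 i; omega)
              _ = k * d := by simp [mul_comm]
          have : d * k = k * d := mul_comm d k
          omega
      | succ g ih =>
        intro hgk hdg
        obtain ⟨j, hjk⟩ : ∃ j, j + (g+1) = k := ⟨k - (g+1), by omega⟩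
        rw [show k - (g+1) = j from by omega]
        have hjd' : j < d := by omega
        obtain ⟨c, hc⟩ : ∃ c, t (d + g) = c := ⟨_, rfl⟩
        by_cases hstep : c + 1 ≤ t j
        · have ih' := ih (by omega) (by omega)
          have hkg : k - g = j + 1 := by omega
          rw [hkg, Finset.sum_range_succ] at ih'
          rw [Finset.sum_range_succ]
          omega
        · push_neg at hstep
          have hflat : ∀ i, j ≤ i → i ≤ d + g → t i = c := by
            intro i h1 h2
            have ha := hmono h1
            have hb := hmono h2
            omega
          have hc1 : 1 ≤ c := by
            have h1 := hF2 j hjd'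
            have := hflat j (le_refl j) (by omega)
            omega
          have hsuffix : ∑ i ∈ range (g+1), t (d+i) = (g+1)*c := by
            have : ∀ i ∈ range (g+1), t (d+i) = c := by
              intro i hi
              exact hflat (d+i) (by omega) (by have := mem_range.1 hi; omega)
            rw [Finset.sum_congr rfl this, Finset.sum_const, card_range, smul_eq_mul]
          by_cases hck : c ≤ k
          · -- flat, small c
            have hqj : q ≤ j := by
              by_contra h'; push_neg at h'
              have h1 := hq1 j (by omega)
              have := hflat j (le_refl j) (by omega)
              omega
            set W := ∑ i ∈ Ico (d+g+1) m, t i with hW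
            -- lower bound for B
            have hBge : q*k + (∑ i ∈ Ico q j, (t i - 1)) + (d-j)*(c-1) + (g+1)*c + W ≤ B := by
              rw [hB, sum_range_split (fun i => min (t' i) k) hdm]
              rw [sum_range_split (fun i => min (t' i) k) (show q ≤ d by omega),
                  show (Ico q d) = (Ico q j) ∪ (Ico j d) from (Finset.Ico_union_Ico_eq_Ico hqj (by omega)).symm,
                  Finset.sum_union (Finset.Ico_disjoint_Ico_consecutive q j d),
                  show (Ico d m) = (Ico d (d+g+1)) ∪ (Ico (d+g+1) m) from
                    (Finset.Ico_union_Ico_eq_Ico (by omega) (by omega)).symm,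
                  Finset.sum_union (Finset.Ico_disjoint_Ico_consecutive d (d+g+1) m)]
              have p1 : ∑ i ∈ range q, min (t' i) k = q * k := by
                have hpt : ∀ i ∈ range q, min (t' i) k = k := by
                  intro i hi
                  have h1 := hq1 i (mem_range.1 hi)
                  have h2 := ht'lt i (by have := mem_range.1 hi; omega)
                  omega
                rw [Finset.sum_congr rfl hpt, Finset.sum_const, card_range, smul_eq_mul]
              have p2 : ∑ i ∈ Ico q j, min (t' i) k = ∑ i ∈ Ico q j, (t i - 1) := by
                refine Finset.sum_congr rfl ?_
                intro i hi
                have h1 := (mem_Ico.1 hi).1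
                have h2 := (mem_Ico.1 hi).2
                have h3 := hq2 i h1
                have h4 := ht'lt i (by omega)
                omega
              have p3 : ∑ i ∈ Ico j d, min (t' i) k = (d-j)*(c-1) := by
                have hpt : ∀ i ∈ Ico j d, min (t' i) k = c - 1 := by
                  intro i hi
                  have h1 := (mem_Ico.1 hi).1
                  have h2 := (mem_Ico.1 hi).2
                  have h3 := hflat i h1 (by omega)
                  have h4 := ht'lt i h2
                  omega
                rw [Finset.sum_congr rfl hpt, Finset.sum_const, Nat.card_Ico, smul_eq_mul]
              have p4 : ∑ i ∈ Ico d (d+g+1), min (t' i) k = (g+1)*c := by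
                have hpt : ∀ i ∈ Ico d (d+g+1), min (t' i) k = c := by
                  intro i hi
                  have h1 := (mem_Ico.1 hi).1
                  have h2 := (mem_Ico.1 hi).2
                  have h3 := hflat i (by omega) (by omega)
                  have h4 := ht'ge i h1
                  omega
                rw [Finset.sum_congr rfl hpt, Finset.sum_const, Nat.card_Ico, smul_eq_mul]
                congr 1; omega
              have p5 : ∑ i ∈ Ico (d+g+1) m, min (t' i) k = W := by
                refine Finset.sum_congr rfl ?_
                intro i hi
                have h1 := (mem_Ico.1 hi).1
                have h4 := ht'ge i (by omega)
                have h5 : t i ≤ c := by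
                  rcases Nat.lt_or_ge i m with him | him
                  · exact hc ▸ hmono (by omega)
                  · have := hz i him; omega
                omega
              omega
            -- key bound on T_q
            have hT : (∑ i ∈ range q, t i) ≤ q*(k+1) + (d-j)*(c-1) + W := by
              by_cases hcq : q + 1 ≤ c
              · -- large c: F1 suffices
                have hTb : (∑ i ∈ range q, t i) ≤ q * (d+1) := by
                  calc (∑ i ∈ range q, t i) ≤ ∑ _i ∈ range q, (d+1) :=
                        Finset.sum_le_sum (fun i _ => hF1 i)
                    _ = q * (d+1) := by simp [mul_comm]
                have hm1 : q*(d+1) = q*(k+1) + q*(d-k) := by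
                  have : d+1 = (k+1) + (d-k) := by omega
                  rw [this, Nat.mul_add]
                have hm2 : q*(d-k) ≤ (d-j)*(c-1) := by
                  calc q*(d-k) ≤ (c-1)*(d-j) := Nat.mul_le_mul (by omega) (by omega)
                    _ = (d-j)*(c-1) := mul_comm _ _
                omega
              · push_neg at hcq  -- c ≤ q
                have h0 := hH q
                have hmin : min (d+1) (q+1) = q+1 := by omega
                rw [hmin] at h0
                have hM : (∑ i ∈ range m, min (t i) (q+1))
                    ≤ q*(q+1) + (j-q)*(q+1) + (d+g+1-j)*c + W := by
                  rw [sum_range_split (fun i => min (t i) (q+1)) (show q ≤ m by omega),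
                    show (Ico q m) = (Ico q j) ∪ (Ico j m) from
                      (Finset.Ico_union_Ico_eq_Ico hqj (by omega)).symm,
                    Finset.sum_union (Finset.Ico_disjoint_Ico_consecutive q j m),
                    show (Ico j m) = (Ico j (d+g+1)) ∪ (Ico (d+g+1) m) from
                      (Finset.Ico_union_Ico_eq_Ico (by omega) (by omega)).symm,
                    Finset.sum_union (Finset.Ico_disjoint_Ico_consecutive j (d+g+1) m)]
                  have b1 : (∑ i ∈ range q, min (t i) (q+1)) ≤ q*(q+1) := by
                    calc (∑ i ∈ range q, min (t i) (q+1)) ≤ ∑ _i ∈ range q, (q+1) :=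
                          Finset.sum_le_sum (fun i _ => by omega)
                      _ = q * (q+1) := by simp [mul_comm]
                  have b2 : (∑ i ∈ Ico q j, min (t i) (q+1)) ≤ (j-q)*(q+1) := by
                    calc (∑ i ∈ Ico q j, min (t i) (q+1)) ≤ ∑ _i ∈ Ico q j, (q+1) :=
                          Finset.sum_le_sum (fun i _ => by omega)
                      _ = (j-q) * (q+1) := by rw [Finset.sum_const, Nat.card_Ico, smul_eq_mul]
                  have b3 : (∑ i ∈ Ico j (d+g+1), min (t i) (q+1)) = (d+g+1-j)*c := by
                    have hpt : ∀ i ∈ Ico j (d+g+1), min (t i) (q+1) = c := by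
                      intro i hi
                      have h1 := (mem_Ico.1 hi).1
                      have h2 := (mem_Ico.1 hi).2
                      have h3 := hflat i h1 (by omega)
                      omega
                    rw [Finset.sum_congr rfl hpt, Finset.sum_const, Nat.card_Ico, smul_eq_mul]
                  have b4 : (∑ i ∈ Ico (d+g+1) m, min (t i) (q+1)) ≤ W := by
                    rw [hW]
                    exact Finset.sum_le_sum (fun i _ => by omega)
                  omega
                -- final arithmetic over ℤ
                have hq0 : (0:ℕ) ≤ q := Nat.zero_le q
                zify [hqj, (show j ≤ d by omega), hc1, (show j ≤ d+g+1 by omega)] at *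
                nlinarith [mul_nonneg (by push_cast; linarith : (0:ℤ) ≤ (g:ℤ)+1)
                  (by push_cast; linarith : (0:ℤ) ≤ (q:ℤ) - (c:ℤ))]
            -- assemble
            have hTq : (∑ i ∈ range q, (t i - 1)) + q = ∑ i ∈ range q, t i :=
              sum_sub_one (fun i hi => hF2 i (by omega))
            have hsplitj : (∑ i ∈ range j, (t i - 1))
                = (∑ i ∈ range q, (t i - 1)) + ∑ i ∈ Ico q j, (t i - 1) :=
              sum_range_split (fun i => t i - 1) hqj
            have hqk1 : q*(k+1) = q*k + q := by ring
            omega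
          · -- flat, large c
            push_neg at hck
            have hk1 : 1 ≤ k := by omega
            have hBge : d*k + (g+1)*k ≤ B := by
              rw [hB, sum_range_split (fun i => min (t' i) k) hdm]
              have e1 : ∑ i ∈ range d, min (t' i) k = d * k := by
                have hpt : ∀ i ∈ range d, min (t' i) k = k := by
                  intro i hi
                  have hi' := mem_range.1 hi
                  have h3 : c ≤ t i := by
                    have := hmono (show i ≤ d + g by omega)
                    omega
                  have h4 := ht'lt i hi'
                  omega
                rw [Finset.sum_congr rfl hpt, Finset.sum_const, card_range, smul_eq_mul]
              have e2 : (g+1)*k ≤ ∑ i ∈ Ico d m, min (t' i) k := by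
                have : ∑ i ∈ Ico d (d+g+1), min (t' i) k = (g+1)*k := by
                  have hpt : ∀ i ∈ Ico d (d+g+1), min (t' i) k = k := by
                    intro i hi
                    have h1 := (mem_Ico.1 hi).1
                    have h2 := (mem_Ico.1 hi).2
                    have h3 := hflat i (by omega) (by omega)
                    have h4 := ht'ge i h1
                    omega
                  rw [Finset.sum_congr rfl hpt, Finset.sum_const, Nat.card_Ico, smul_eq_mul]
                  congr 1; omega
                rw [← this]
                exact Finset.sum_le_sum_of_subset (Finset.Ico_subset_Ico_right (by omega))
              omega
            have h1 : (∑ i ∈ range j, (t i - 1)) ≤ j*d := by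
              calc (∑ i ∈ range j, (t i - 1)) ≤ ∑ _i ∈ range j, d :=
                    Finset.sum_le_sum (fun i _ => by have := hF1 i; omega)
                _ = j * d := by simp [mul_comm]
            have h2 : (g+1)*c ≤ (g+1)*(d+1) := by
              have hcd : c ≤ d + 1 := by have := hF1 (d+g); omega
              exact Nat.mul_le_mul_left _ hcd
            have harith : j*d + (g+1)*(d+1) ≤ d*k + (g+1)*k := by nlinarith
            omega
    -- conclude for general j
    intro j g hjg hjd hdg
    have hg : g ≤ k := by omega
    have hjle : j ≤ k - g := by omega
    have hpre : (∑ i ∈ range j, (t i - 1)) ≤ ∑ i ∈ range (k-g), (t i - 1) := by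
      rw [sum_range_split (fun i => t i - 1) hjle]; omega
    have := main g hg hdg
    omega


lemma sum_ite_lt' (K a : ℕ) : (∑ j ∈ range K, if j < a then 1 else 0) = min a K := by
  induction K with
  | zero => simp
  | succ n ih => rw [Finset.sum_range_succ, ih]; split <;> omega

lemma emb_sum_le (h : ℕ → ℕ) (hmono : ∀ ⦃i j : ℕ⦄, i ≤ j → h j ≤ h i)
    (a : ℕ) (s : Finset ℕ) (hs : ∀ x ∈ s, a ≤ x) :
    ∑ x ∈ s, h x ≤ ∑ i ∈ range s.card, h (a + i) := by
  obtain ⟨r, hr⟩ : ∃ r, s.card = r := ⟨_, rfl⟩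
  rw [hr]
  have e := s.orderEmbOfFin hr
  have hstep : ∀ v : ℕ, ∀ hv : v < r, a + v ≤ s.orderEmbOfFin hr ⟨v, hv⟩ := by
    intro v
    induction v with
    | zero => intro hv; simpa using hs _ (Finset.orderEmbOfFin_mem s hr _)
    | succ w ihw =>
      intro hv
      have h1 := ihw (by omega)
      have h2 : s.orderEmbOfFin hr ⟨w, by omega⟩ < s.orderEmbOfFin hr ⟨w+1, hv⟩ :=
        (s.orderEmbOfFin hr).strictMono (by simp [Fin.lt_iff_val_lt_val])
      omega
  have hbij : ∑ x ∈ s, h x = ∑ i : Fin r, h (s.orderEmbOfFin hr i) := by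
    refine (Finset.sum_bij (fun (i : Fin r) _ => s.orderEmbOfFin hr i) ?_ ?_ ?_ ?_).symm
    · intro i _; exact Finset.orderEmbOfFin_mem s hr i
    · intro i _ j _ hij; exact (s.orderEmbOfFin hr).injective hij
    · intro x hx
      have : x ∈ Set.range (s.orderEmbOfFin hr) := by
        rw [Finset.range_orderEmbOfFin]; exact hx
      obtain ⟨i, hi⟩ := this
      exact ⟨i, Finset.mem_univ i, hi⟩
    · intro i _; rfl
  rw [hbij]
  calc ∑ i : Fin r, h (s.orderEmbOfFin hr i)
      ≤ ∑ i : Fin r, h (a + (i : ℕ)) :=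
        Finset.sum_le_sum (fun i _ => hmono (hstep i.val i.isLt))
    _ = ∑ i ∈ range r, h (a + i) := Fin.sum_univ_eq_sum_range (fun i => h (a + i)) r


end PartB

section PartC
open Finset List


lemma star_subset (m d : ℕ) (t : ℕ → ℕ) (hdm : d ≤ m)
    (hmono : ∀ ⦃i j : ℕ⦄, i ≤ j → t j ≤ t i)
    (hF1 : ∀ i, t i ≤ d + 1)
    (hF2 : ∀ i, i < d → 1 ≤ t i)
    (hz : ∀ i, m ≤ i → t i = 0)
    (hH : ∀ c : ℕ, (d + 1) + (∑ i ∈ range c, t i) ≤ min (d+1) (c+1) + ∑ i ∈ range m, min (t i) (c+1)) :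
    ∀ (k : ℕ) (s : Finset ℕ), s ⊆ range m → s.card ≤ k →
      (∑ x ∈ s, (t x - (if x < d then 1 else 0))) ≤
        ∑ i ∈ range m, min (t i - (if i < d then 1 else 0)) k := by
  intro k s hsub hcard
  classical
  have hsplit : (∑ x ∈ s, (t x - if x < d then 1 else 0)) =
      (∑ x ∈ s.filter (fun x => x < d), (t x - 1)) +
        ∑ x ∈ s.filter (fun x => ¬ x < d), t x := by
    rw [← Finset.sum_filter_add_sum_filter_not s (fun x => x < d)]
    congr 1
    · exact Finset.sum_congr rfl (fun x hx => by rw [if_pos (Finset.mem_filter.1 hx).2])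
    · exact Finset.sum_congr rfl (fun x hx => by
        rw [if_neg (Finset.mem_filter.1 hx).2]; omega)
  have hj : (s.filter (fun x => x < d)).card ≤ d := by
    have : s.filter (fun x => x < d) ⊆ range d := by
      intro x hx; exact Finset.mem_range.2 (Finset.mem_filter.1 hx).2
    simpa using card_le_card this
  have hg : (s.filter (fun x => ¬ x < d)).card ≤ m - d := by
    have : s.filter (fun x => ¬ x < d) ⊆ Ico d m := by
      intro x hx
      have h1 := (Finset.mem_filter.1 hx).2
      have h2 := Finset.mem_range.1 (hsub (Finset.mem_filter.1 hx).1)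
      exact mem_Ico.2 ⟨by omega, h2⟩
    have := card_le_card this
    simpa [Nat.card_Ico] using this
  have h1 : (∑ x ∈ s.filter (fun x => x < d), (t x - 1)) ≤
      ∑ i ∈ range (s.filter (fun x => x < d)).card, (t i - 1) := by
    have := emb_sum_le (fun x => t x - 1)
      (fun i j hij => by show t j - 1 ≤ t i - 1; have := hmono hij; omega) 0
      (s.filter (fun x => x < d)) (fun _ _ => Nat.zero_le _)
    simpa using this
  have h2 : (∑ x ∈ s.filter (fun x => ¬ x < d), t x) ≤
      ∑ i ∈ range (s.filter (fun x => ¬ x < d)).card, t (d + i) :=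
    emb_sum_le t hmono d _ (fun x hx => by have := (Finset.mem_filter.1 hx).2; omega)
  have hcards := Finset.card_filter_add_card_filter_not (s := s) (fun x => x < d)
  have := star_main m d t hdm hmono hF1 hF2 hz hH k
    (s.filter (fun x => x < d)).card (s.filter (fun x => ¬ x < d)).card
    (by omega) hj (by omega)
  omega

lemma fin_card_filter_lt {n : ℕ} (K : ℕ) :
    ((univ : Finset (Fin n)).filter (fun i : Fin n => (i:ℕ) < K)).card = min K n := by
  rw [Finset.card_eq_sum_ones, Finset.sum_filter,
    Fin.sum_univ_eq_sum_range (fun x => if x < K then 1 else 0) n, sum_ite_lt']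

lemma fin_prefix_sum {n : ℕ} (F : Fin n → ℕ) (FN : ℕ → ℕ)
    (hFN : ∀ i : Fin n, FN i.val = F i) (K : ℕ) :
    ∑ i ∈ (univ : Finset (Fin n)).filter (fun i : Fin n => (i:ℕ) < K), F i =
      ∑ x ∈ Finset.range (min K n), FN x := by
  rw [Finset.sum_filter]
  have h1 : ∑ i : Fin n, (if (i:ℕ) < K then F i else 0) =
      ∑ x ∈ Finset.range n, (if x < K then FN x else 0) := by
    rw [← Fin.sum_univ_eq_sum_range (fun x => if x < K then FN x else 0) n]
    exact Finset.sum_congr rfl (fun i _ => by rw [hFN i])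
  rw [h1, ← Finset.sum_filter,
    show (Finset.range n).filter (fun x => x < K) = Finset.range (min K n) from by
      ext x; simp only [Finset.mem_filter, Finset.mem_range]; omega]

lemma fin_sum_split {m : ℕ} (F : Fin (m+1) → ℕ) (FN : ℕ → ℕ)
    (hFN : ∀ i : Fin m, FN i.val = F i.succ) :
    ∑ i, F i = F 0 + ∑ x ∈ range m, FN x := by
  rw [Fin.sum_univ_succ]
  congr 1
  rw [← Fin.sum_univ_eq_sum_range FN m]
  exact Finset.sum_congr rfl (fun i _ => (hFN i).symm)

lemma exists_sort_desc {n : ℕ} (v : Fin n → ℕ) :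
    ∃ e : Equiv.Perm (Fin n), ∀ ⦃i j : Fin n⦄, i ≤ j → v (e j) ≤ v (e i) := by
  refine ⟨(Fin.revPerm).trans (Tuple.sort v), ?_⟩
  intro i j hij
  have hm := Tuple.monotone_sort v (Fin.rev_le_rev.mpr hij)
  simpa using hm

theorem core : ∀ (n : ℕ) (f : Fin n → ℕ),
    (∀ ⦃i j : Fin n⦄, i ≤ j → f j ≤ f i) →
    (∀ (k : ℕ) (u : Finset (Fin n)), u.card ≤ k → ∑ i ∈ u, f i ≤ ∑ i, min (f i) k) →
    ∃ A : Matrix (Fin n) (Fin n) ℕ,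
      (∀ i j, A i j = 0 ∨ A i j = 1) ∧ (∀ i, ∑ j, A i j = f i) ∧ (∀ i j, A i j = A j i) := by
  intro n
  induction n with
  | zero =>
    intro f _ _
    exact ⟨0, fun i j => Or.inl rfl, fun i => i.elim0, fun i j => rfl⟩
  | succ m ih =>
    intro f hmono hcond
    rcases Nat.eq_zero_or_pos (f 0) with ha | ha
    · refine ⟨0, fun i j => Or.inl rfl, ?_, fun i j => rfl⟩
      intro i
      have h0 : f i = 0 := le_antisymm (by rw [← ha]; exact hmono (Fin.zero_le i)) (Nat.zero_le _)
      simp [h0]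
    · obtain ⟨d, hd⟩ : ∃ d, f 0 = d + 1 := ⟨f 0 - 1, by omega⟩
      set fN : ℕ → ℕ := fun x => if h : x < m + 1 then f ⟨x, h⟩ else 0 with hfN
      have hfNval : ∀ i : Fin (m+1), fN i.val = f i := by
        intro i; simp only [hfN, i.isLt, dif_pos]
      set tN : ℕ → ℕ := fun x => fN (x+1) with htN
      have htNval : ∀ i : Fin m, tN i.val = f i.succ := by
        intro i
        have : (i.val + 1) < m + 1 := by omega
        simp only [htN, hfN, this, dif_pos]
        rfl
      -- counting fact used twice
      have hcount1 : ∑ i : Fin (m+1), min (f i) 1 ≤ m + 1 := by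
        calc ∑ i : Fin (m+1), min (f i) 1 ≤ ∑ _i : Fin (m+1), 1 :=
              Finset.sum_le_sum (fun i _ => by omega)
          _ = m + 1 := by simp
      have hc1 : f 0 ≤ ∑ i, min (f i) 1 := by
        have := hcond 1 {0} (by simp)
        simpa using this
      have hdm : d ≤ m := by omega
      have hF2f : ∀ p : Fin (m+1), p.val ≤ d → 1 ≤ f p := by
        intro p hp
        by_contra hcon; push_neg at hcon
        have hfp : f p = 0 := by omega
        have hb : ∑ i, min (f i) 1 ≤ ∑ i : Fin (m+1), (if (i:ℕ) < p.val then 1 else 0) := by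
          refine Finset.sum_le_sum (fun i _ => ?_)
          rcases Nat.lt_or_ge (i:ℕ) p.val with h' | h'
          · rw [if_pos h']; omega
          · have hple : p ≤ i := by rwa [Fin.le_def]
            have : f i ≤ f p := hmono hple
            rw [if_neg (by omega)]; omega
        have hcnt : ∑ i : Fin (m+1), (if (i:ℕ) < p.val then 1 else 0) = p.val := by
          rw [Fin.sum_univ_eq_sum_range (fun x => if x < p.val then 1 else 0) (m+1), sum_ite_lt']
          have := p.isLt; omega
        omega
      have htmono : ∀ ⦃i j : ℕ⦄, i ≤ j → tN j ≤ tN i := by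
        intro i j hij
        simp only [htN, hfN]
        split
        · split
          · exact hmono (by rw [Fin.le_def]; simpa using by omega)
          · omega
        · split
          · omega
          · omega
      have htz : ∀ x, m ≤ x → tN x = 0 := by
        intro x hx; simp only [htN, hfN]; rw [dif_neg (by omega)]
      have htF1 : ∀ x, tN x ≤ d + 1 := by
        intro x
        rcases Nat.lt_or_ge x m with h' | h'
        · have : tN x = f (⟨x, by omega⟩ : Fin m).succ := htNval ⟨x, by omega⟩
          rw [this, ← hd]
          exact hmono (Fin.zero_le _)
        · rw [htz x h']; omega
      have htF2 : ∀ x, x < d → 1 ≤ tN x := by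
        intro x hx
        have hxm : x < m := by omega
        have : tN x = f (⟨x, hxm⟩ : Fin m).succ := htNval ⟨x, hxm⟩
        rw [this]
        exact hF2f _ (by simp [Fin.succ]; omega)
      have htrunc : ∀ c, ∑ i ∈ range c, tN i = ∑ i ∈ range (min c m), tN i := by
        intro c
        rcases le_or_gt c m with h' | h'
        · rw [min_eq_left h']
        · rw [min_eq_right (by omega), sum_range_split tN (show m ≤ c by omega)]
          have : ∑ i ∈ Ico m c, tN i = 0 := by
            refine Finset.sum_eq_zero (fun x hx => htz x (mem_Ico.1 hx).1)
          omega
      have htH : ∀ c : ℕ, (d+1) + (∑ i ∈ range c, tN i) ≤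
          min (d+1) (c+1) + ∑ i ∈ range m, min (tN i) (c+1) := by
        intro c
        have hK : min (c+1) (m+1) = min c m + 1 := by omega
        have hcardu := fin_card_filter_lt (n := m+1) (c+1)
        have hcondu := hcond (c+1) _ (by rw [hcardu]; omega)
        have hpre := fin_prefix_sum f fN hfNval (c+1)
        rw [hpre, hK, Finset.sum_range_succ'] at hcondu
        -- hcondu : (∑ i ∈ range (min c m), fN (i+1)) + fN 0 ≤ ∑ i, min (f i) (c+1)
        have hf0 : fN 0 = d + 1 := by rw [show (0:ℕ) = (0 : Fin (m+1)).val from rfl, hfNval]; exact hd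
        have hrhs : ∑ i, min (f i) (c+1) =
            min (d+1) (c+1) + ∑ x ∈ range m, min (tN x) (c+1) := by
          rw [fin_sum_split (fun i => min (f i) (c+1)) (fun x => min (tN x) (c+1))
            (fun i => by show min (tN i.val) (c+1) = min (f i.succ) (c+1); rw [htNval i]), hd]
        rw [hrhs] at hcondu
        rw [htrunc c]
        have : ∑ i ∈ range (min c m), fN (i+1) = ∑ i ∈ range (min c m), tN i := rfl
        omega
      -- subset condition for the reduced sequence
      set t' : Fin m → ℕ := fun i => f i.succ - (if (i:ℕ) < d then 1 else 0) with ht'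
      have ht'val : ∀ i : Fin m, t' i = tN i.val - (if i.val < d then 1 else 0) := by
        intro i; rw [ht']; simp only [htNval i]
      have hscond' : ∀ (k : ℕ) (u : Finset (Fin m)), u.card ≤ k →
          ∑ i ∈ u, t' i ≤ ∑ i, min (t' i) k := by
        intro k u hu
        have hstar := star_subset m d tN hdm htmono htF1 htF2 htz htH k
          (u.image Fin.val)
          (by intro x hx
              obtain ⟨i, _, rfl⟩ := Finset.mem_image.1 hx
              exact Finset.mem_range.2 i.isLt)
          (le_trans Finset.card_image_le hu)
        have hL : ∑ x ∈ u.image Fin.val, (tN x - if x < d then 1 else 0) = ∑ i ∈ u, t' i := by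
          rw [Finset.sum_image (fun i _ j _ h => Fin.val_injective h)]
          exact Finset.sum_congr rfl (fun i _ => (ht'val i).symm)
        have hR : ∑ i ∈ range m, min (tN i - (if i < d then 1 else 0)) k =
            ∑ i, min (t' i) k := by
          rw [← Fin.sum_univ_eq_sum_range (fun x => min (tN x - (if x < d then 1 else 0)) k) m]
          exact Finset.sum_congr rfl (fun i _ => by rw [← ht'val i])
        rw [hL, hR] at hstar
        exact hstar
      -- sort t'
      obtain ⟨e, hemono⟩ := exists_sort_desc t'
      have hucond : ∀ (k : ℕ) (w : Finset (Fin m)), w.card ≤ k →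
          ∑ i ∈ w, t' (e i) ≤ ∑ i, min (t' (e i)) k := by
        intro k w hw
        have h1 : ∑ i ∈ w, t' (e i) = ∑ i ∈ w.image e, t' i :=
          (Finset.sum_image (fun i _ j _ h => e.injective h)).symm
        have h2 : ∑ i : Fin m, min (t' (e i)) k = ∑ i, min (t' i) k :=
          Equiv.sum_comp e (fun i => min (t' i) k)
        rw [h1, h2]
        refine hscond' k _ ?_
        rw [Finset.card_image_of_injective _ e.injective]; exact hw
      obtain ⟨Ms, hMs01, hMsrow, hMssym⟩ := ih (fun i => t' (e i)) hemono hucond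
      set M' : Matrix (Fin m) (Fin m) ℕ := fun i j => Ms (e.symm i) (e.symm j) with hM'
      have hM'row : ∀ i, ∑ j, M' i j = t' i := by
        intro i
        have h1 : ∑ j, M' i j = ∑ j, Ms (e.symm i) j := Equiv.sum_comp e.symm _
        rw [h1, hMsrow]
        simp
      have hM'01 : ∀ i j, M' i j = 0 ∨ M' i j = 1 := fun i j => hMs01 _ _
      have hM'sym : ∀ i j, M' i j = M' j i := fun i j => hMssym _ _
      -- assemble
      refine ⟨fun i j =>
        Fin.cases (Fin.cases 1 (fun j' => if (j':ℕ) < d then 1 else 0) j)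
          (fun i' => Fin.cases (if (i':ℕ) < d then 1 else 0) (fun j' => M' i' j') j) i,
        ?_, ?_, ?_⟩
      · intro i j
        refine Fin.cases ?_ (fun i' => ?_) i <;> refine Fin.cases ?_ (fun j' => ?_) j
        · simp
        · simp only [Fin.cases_zero, Fin.cases_succ]; split <;> simp
        · simp only [Fin.cases_zero, Fin.cases_succ]; split <;> simp
        · simp only [Fin.cases_succ]; exact hM'01 i' j'
      · intro i
        refine Fin.cases ?_ (fun i' => ?_) i
        · rw [Fin.sum_univ_succ]
          simp only [Fin.cases_zero, Fin.cases_succ]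
          rw [Fin.sum_univ_eq_sum_range (fun x => if x < d then 1 else 0) m, sum_ite_lt', hd]
          omega
        · rw [Fin.sum_univ_succ]
          simp only [Fin.cases_zero, Fin.cases_succ]
          rw [hM'row i']
          have ht'i : t' i' = f i'.succ - (if (i':ℕ) < d then 1 else 0) := rfl
          have hge : (i' : ℕ) < d → 1 ≤ f i'.succ := by
            intro h'
            exact hF2f i'.succ (by simp [Fin.succ]; omega)
          by_cases h' : (i' : ℕ) < d
          · rw [if_pos h'] at ht'i ⊢
            have := hge h'
            omega
          · rw [if_neg h'] at ht'i ⊢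
            omega
      · intro i j
        refine Fin.cases ?_ (fun i' => ?_) i <;> refine Fin.cases ?_ (fun j' => ?_) j
        · rfl
        · simp only [Fin.cases_zero, Fin.cases_succ]
        · simp only [Fin.cases_zero, Fin.cases_succ]
        · simp only [Fin.cases_succ]; exact hM'sym i' j'
lemma vecMS_map_min {n : ℕ} (v : Fin n → ℕ) (k : ℕ) :
    ((vecMS v).map (fun x => min x k)).sum = ∑ i, min (v i) k := by
  rw [vecMS, Multiset.map_map]; rfl

lemma exists_subset_of_le_vecMS {n : ℕ} (v : Fin n → ℕ) (N : Multiset ℕ) (h : N ≤ vecMS v) :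
    ∃ u : Finset (Fin n), u.card = Multiset.card N ∧ ∑ i ∈ u, v i = N.sum := by
  have hv : vecMS v = ((List.ofFn v : List ℕ) : Multiset ℕ) := by
    rw [vecMS, List.ofFn_eq_map]; rfl
  rw [hv] at h
  obtain ⟨l', rfl⟩ := Quotient.exists_rep N
  rw [show ((⟦l'⟧ : Multiset ℕ) = (l' : Multiset ℕ)) from rfl, Multiset.coe_le] at h
  obtain ⟨w, hwperm, hwsub⟩ := h
  rw [List.ofFn_eq_map] at hwsub
  obtain ⟨lI, hlI, rfl⟩ := List.sublist_map_iff.1 hwsub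
  refine ⟨⟨(lI : Multiset (Fin n)), (List.nodup_finRange n).sublist hlI⟩, ?_, ?_⟩
  · have h1 : (lI.map v).length = l'.length := hwperm.length_eq
    exact (by simpa using h1 : lI.length = l'.length)
  · have h1 : (∑ i ∈ (⟨(lI : Multiset (Fin n)), (List.nodup_finRange n).sublist hlI⟩ : Finset (Fin n)), v i)
        = (lI.map v).sum := by
      show (Multiset.map v (lI : Multiset (Fin n))).sum = _
      rfl
    rw [h1, hwperm.sum_eq]
    rfl


end PartC

/-- **Symmetric (0,1)-matrices (Fulkerson–Hoffman–McAndrew).**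
`𝒜^{-1}(R,S) ≠ ∅` iff `R = S` and `R ⪯ R*`. -/
theorem symmetric_zeroOne (n : ℕ) (R S : Fin n → ℕ)
    (hsum : ∑ i, R i = ∑ j, S j)
    (hRle : ∀ i, R i ≤ n) (hSle : ∀ j, S j ≤ n) :
    (∃ A : Matrix (Fin n) (Fin n) ℕ,
        (∀ i j, A i j = 0 ∨ A i j = 1) ∧
        (∀ i, ∑ j, A i j = R i) ∧
        (∀ j, ∑ i, A i j = S j) ∧
        (∀ i j, A i j = A j i)) ↔
      (R = S ∧ MajorizedBy (vecMS R) (conjMS (vecMS R))) := by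
  constructor
  · rintro ⟨A, h01, hrow, hcol, hsym⟩
    have hRS : R = S := by
      funext j
      rw [← hcol j, ← hrow j]
      exact Finset.sum_congr rfl (fun i _ => hsym j i)
    refine ⟨hRS, (conjMS_sum _).symm, ?_⟩
    intro k
    rw [topSum_conjMS, vecMS_map_min]
    obtain ⟨N, hNle, hNcard, hNsum⟩ := topSum_exists (vecMS R) k
    rw [← hNsum]
    obtain ⟨u, hucard, husum⟩ := exists_subset_of_le_vecMS R N hNle
    rw [← husum]
    calc ∑ j ∈ u, R j = ∑ j ∈ u, ∑ i, A i j := by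
          refine Finset.sum_congr rfl (fun j _ => ?_)
          rw [hRS]; exact (hcol j).symm
      _ = ∑ i, ∑ j ∈ u, A i j := Finset.sum_comm
      _ ≤ ∑ i, min (R i) k := by
          refine Finset.sum_le_sum (fun i _ => ?_)
          have hle1 : ∑ j ∈ u, A i j ≤ ∑ j, A i j :=
            Finset.sum_le_sum_of_subset (Finset.subset_univ u)
          rw [hrow i] at hle1
          have hle2 : ∑ j ∈ u, A i j ≤ u.card := by
            calc ∑ j ∈ u, A i j ≤ ∑ _j ∈ u, 1 :=
                  Finset.sum_le_sum (fun j _ => by rcases h01 i j with h | h <;> omega)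
              _ = u.card := by simp
          have : u.card ≤ k := by rw [hucard]; exact hNcard
          omega
  · rintro ⟨hRS, hmaj⟩
    have hSCond : ∀ (k : ℕ) (u : Finset (Fin n)), u.card ≤ k →
        ∑ i ∈ u, R i ≤ ∑ i, min (R i) k := by
      intro k u hu
      have hN : (Multiset.map R u.val) ≤ vecMS R :=
        Multiset.map_le_map (Finset.val_le_iff.2 (Finset.subset_univ u))
      have hcard : Multiset.card (Multiset.map R u.val) ≤ k := by
        rw [Multiset.card_map]; simpa using hu
      have h2 := sum_le_topSum hN hcard
      have h3 := hmaj.2 k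
      rw [topSum_conjMS, vecMS_map_min] at h3
      have h1 : (∑ i ∈ u, R i) = (Multiset.map R u.val).sum := rfl
      omega
    obtain ⟨e, he⟩ := exists_sort_desc R
    have hfcond : ∀ (k : ℕ) (u : Finset (Fin n)), u.card ≤ k →
        ∑ i ∈ u, R (e i) ≤ ∑ i, min (R (e i)) k := by
      intro k u hu
      have h1 : ∑ i ∈ u, R (e i) = ∑ i ∈ u.image e, R i :=
        (Finset.sum_image (fun i _ j _ h => e.injective h)).symm
      have h2 : ∑ i : Fin n, min (R (e i)) k = ∑ i, min (R i) k :=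
        Equiv.sum_comp e (fun i => min (R i) k)
      rw [h1, h2]
      refine hSCond k _ ?_
      rw [Finset.card_image_of_injective _ e.injective]; exact hu
    obtain ⟨A, h01, hrow, hsym⟩ := core n (fun i => R (e i)) he hfcond
    refine ⟨fun i j => A (e.symm i) (e.symm j), fun i j => h01 _ _, ?_, ?_, fun i j => hsym _ _⟩
    · intro i
      calc ∑ j, A (e.symm i) (e.symm j) = ∑ j, A (e.symm i) j := Equiv.sum_comp e.symm _
        _ = R (e (e.symm i)) := hrow (e.symm i)
        _ = R i := by simp
    · intro j
      have h1 : ∑ i, A (e.symm i) (e.symm j) = ∑ i, A (e.symm j) (e.symm i) :=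
        Finset.sum_congr rfl (fun i _ => hsym _ _)
      rw [h1]
      calc ∑ i, A (e.symm j) (e.symm i) = ∑ i, A (e.symm j) i := Equiv.sum_comp e.symm _
        _ = R (e (e.symm j)) := hrow (e.symm j)
        _ = S j := by rw [← hRS]; simp
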